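/- (Markov–Kakutani) Every abelian semigroup of continuous affine self-maps of a nonempty convex compact subset K of a Hausdorff locally convex topological vector space has a common fixed point in K. -/

import Mathlib

open Finset Set Filter Bornology Pointwise Topology

def AffOn {X : Type*} [AddCommGroup X] [Module ℝ X] (K : Set X) (f : K → K) : Prop :=
  ∀ (x y : K) (t : ℝ), 0 ≤ t → t ≤ 1 →
    ∀ h : t • (x : X) + (1 - t) • (y : X) ∈ K,
      (f ⟨_, h⟩ : X) = t • (f x : X) + (1 - t) • (f y : X)

section MKaux

variable {X : Type*} [AddCommGroup X] [Module ℝ X]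

noncomputable def mkAvg (n : ℕ) (y : ℕ → X) : X :=
  ((n : ℝ))⁻¹ • ∑ k ∈ Finset.range n, y k

theorem mkAvg_mem {K : Set X} (hconv : Convex ℝ K) {n : ℕ} (hn : 0 < n)
    {y : ℕ → X} (hy : ∀ k, y k ∈ K) : mkAvg n y ∈ K := by
  have hn' : (n : ℝ) ≠ 0 := Nat.cast_ne_zero.2 hn.ne'
  rw [mkAvg, Finset.smul_sum]
  refine hconv.sum_mem (fun i _ => by positivity) ?_ (fun i _ => hy i)
  simp [Finset.sum_const, Finset.card_range]
  field_simp

theorem mkAvg_succ {n : ℕ} (hn : 0 < n) (y : ℕ → X) :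
    mkAvg (n + 1) y = ((n : ℝ) + 1)⁻¹ • y n + (1 - ((n : ℝ) + 1)⁻¹) • mkAvg n y := by
  have hn' : (n : ℝ) ≠ 0 := Nat.cast_ne_zero.2 hn.ne'
  have hn1 : (n : ℝ) + 1 ≠ 0 := by positivity
  rw [mkAvg, mkAvg, Finset.sum_range_succ]
  push_cast
  match_scalars <;> field_simp <;> ring

theorem mkAvg_comm (n m : ℕ) (c : ℕ → ℕ → X) :
    mkAvg n (fun k => mkAvg m (fun l => c k l))
      = mkAvg m (fun l => mkAvg n (fun k => c k l)) := by
  simp only [mkAvg, Finset.smul_sum, smul_smul]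
  rw [Finset.sum_comm]
  simp [mul_comm]

theorem AffOn.comp' {K : Set X} (hconv : Convex ℝ K) {f g : K → K}
    (hf : AffOn K f) (hg : AffOn K g) : AffOn K (f ∘ g) := by
  intro x y t ht0 ht1 h
  have h2 : t • ((g x : K) : X) + (1 - t) • ((g y : K) : X) ∈ K :=
    hconv (g x).2 (g y).2 ht0 (by linarith) (by ring)
  have e : g ⟨_, h⟩ = ⟨_, h2⟩ := Subtype.ext (hg x y t ht0 ht1 h)
  show (f (g ⟨_, h⟩) : X) = _
  rw [e, hf (g x) (g y) t ht0 ht1 h2]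
  rfl

theorem AffOn.id' {K : Set X} : AffOn K (id : K → K) := by
  intro x y t ht0 ht1 h
  rfl

theorem AffOn.iterate' {K : Set X} (hconv : Convex ℝ K) {f : K → K}
    (hf : AffOn K f) : ∀ k, AffOn K (f^[k]) := by
  intro k
  induction k with
  | zero => exact AffOn.id'
  | succ k ih =>
    rw [Function.iterate_succ]
    exact AffOn.comp' hconv ih hf

theorem AffOn.map_mkAvg {K : Set X} (hconv : Convex ℝ K) {f : K → K} (hf : AffOn K f) :
    ∀ n, 0 < n → ∀ (y : ℕ → K) (h : mkAvg n (fun k => ((y k : K) : X)) ∈ K),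
      (f ⟨_, h⟩ : X) = mkAvg n (fun k => ((f (y k) : K) : X)) := by
  intro n
  induction n with
  | zero => intro h; exact absurd h (lt_irrefl 0)
  | succ n ih =>
    intro _ y h
    rcases Nat.eq_zero_or_pos n with rfl | hn
    · have hy : mkAvg 1 (fun k => ((y k : K) : X)) = y 0 := by simp [mkAvg]
      have e : (⟨_, h⟩ : K) = y 0 := Subtype.ext hy
      rw [e]
      simp [mkAvg]
    · have hb : mkAvg n (fun k => ((y k : K) : X)) ∈ K := mkAvg_mem hconv hn (fun k => (y k).2)
      have hpt : mkAvg (n + 1) (fun k => ((y k : K) : X))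
          = ((n : ℝ) + 1)⁻¹ • ((y n : K) : X)
            + (1 - ((n : ℝ) + 1)⁻¹) • ((⟨_, hb⟩ : K) : X) := mkAvg_succ hn _
      have h1n : (1:ℝ) ≤ (n : ℝ) + 1 := by
        have := Nat.cast_nonneg (α := ℝ) n
        linarith
      have ht0 : (0:ℝ) ≤ ((n : ℝ) + 1)⁻¹ := by positivity
      have ht1 : ((n : ℝ) + 1)⁻¹ ≤ 1 := inv_le_one_of_one_le₀ h1n
      have h' : ((n : ℝ) + 1)⁻¹ • ((y n : K) : X)
          + (1 - ((n : ℝ) + 1)⁻¹) • ((⟨_, hb⟩ : K) : X) ∈ K := hpt ▸ h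
      have e1 : (⟨_, h⟩ : K) = ⟨_, h'⟩ := Subtype.ext hpt
      rw [e1, hf (y n) ⟨_, hb⟩ _ ht0 ht1 h', ih hn y hb]
      exact (mkAvg_succ hn (fun k => ((f (y k) : K) : X))).symm

end MKaux

section MKtop

variable {X : Type*} [AddCommGroup X] [Module ℝ X] [TopologicalSpace X]
  [IsTopologicalAddGroup X] [ContinuousSMul ℝ X]

noncomputable def Tav {K : Set X} (hconv : Convex ℝ K) (f : K → K) (n : ℕ) (q : K) : K :=
  ⟨mkAvg (n + 1) (fun k => ((f^[k] q : K) : X)),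
    mkAvg_mem hconv n.succ_pos (fun k => (f^[k] q).2)⟩

theorem continuous_iterateK {K : Set X} {f : K → K} (hf : Continuous f) (k : ℕ) :
    Continuous (f^[k]) := by
  induction k with
  | zero => exact continuous_id
  | succ k ih => rw [Function.iterate_succ]; exact ih.comp hf

theorem continuous_Tav {K : Set X} (hconv : Convex ℝ K) {f : K → K} (hf : Continuous f)
    (n : ℕ) : Continuous (Tav hconv f n) := by
  apply Continuous.subtype_mk
  apply Continuous.const_smul
  exact continuous_finset_sum _ fun k _ => continuous_subtype_val.comp (continuous_iterateK hf k)

theorem Tav_comm {K : Set X} (hconv : Convex ℝ K) {f g : K → K}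
    (hf : AffOn K f) (hg : AffOn K g) (hfg : f ∘ g = g ∘ f) (n m : ℕ) :
    Tav hconv f n ∘ Tav hconv g m = Tav hconv g m ∘ Tav hconv f n := by
  have hcomm : Function.Commute f g := fun x => congrFun hfg x
  have hkl : ∀ k l (x : K), f^[k] (g^[l] x) = g^[l] (f^[k] x) :=
    fun k l x => (hcomm.iterate_iterate k l) x
  funext q
  apply Subtype.ext
  simp only [Function.comp_apply]
  have L : ((Tav hconv f n (Tav hconv g m q) : K) : X)
      = mkAvg (n + 1) (fun k => mkAvg (m + 1) (fun l => ((f^[k] (g^[l] q) : K) : X))) := by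
    show mkAvg (n + 1) (fun k => ((f^[k] (Tav hconv g m q) : K) : X)) = _
    congr 1
    funext k
    exact AffOn.map_mkAvg hconv (AffOn.iterate' hconv hf k) (m + 1) m.succ_pos
      (fun l => g^[l] q) _
  have R : ((Tav hconv g m (Tav hconv f n q) : K) : X)
      = mkAvg (m + 1) (fun l => mkAvg (n + 1) (fun k => ((g^[l] (f^[k] q) : K) : X))) := by
    show mkAvg (m + 1) (fun l => ((g^[l] (Tav hconv f n q) : K) : X)) = _
    congr 1
    funext l
    exact AffOn.map_mkAvg hconv (AffOn.iterate' hconv hg l) (n + 1) n.succ_pos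
      (fun k => f^[k] q) _
  rw [L, R]
  simp only [hkl]
  exact mkAvg_comm _ _ _

theorem compact_subset_scaled {S V : Set X} (hS : IsCompact S) (hV : V ∈ 𝓝 (0 : X)) :
    ∃ n : ℕ, S ⊆ ((n : ℝ) + 1) • V := by
  obtain ⟨W, ⟨hW, hWbal⟩, hWV⟩ := (nhds_basis_balanced ℝ X).mem_iff.1 hV
  have h0i : (0 : X) ∈ interior W := mem_interior_iff_mem_nhds.2 hW
  have hWi : interior W ∈ 𝓝 (0 : X) := isOpen_interior.mem_nhds h0i
  have hWibal : Balanced ℝ (interior W) := hWbal.interior h0i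
  have hcov : ∀ x ∈ S, ∃ n : ℕ, x ∈ ((n : ℝ) + 1) • interior W := by
    intro x hx
    have habs : Absorbs ℝ (interior W) {x} := absorbent_nhds_zero hWi x
    obtain ⟨c, hc⟩ := habs.eventually.exists
    obtain ⟨n, hn⟩ := exists_nat_ge ‖c‖
    refine ⟨n, ?_⟩
    have hmono : c • interior W ⊆ ((n : ℝ) + 1) • interior W := by
      apply hWibal.smul_mono
      have hnn : ‖((n : ℝ) + 1)‖ = (n : ℝ) + 1 := Real.norm_of_nonneg (by positivity)
      rw [hnn]
      linarith
    exact hmono (hc rfl)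
  choose! nn hnn using hcov
  have hUopen : ∀ x : X, IsOpen (((nn x : ℝ) + 1) • interior W) := by
    intro x
    exact isOpen_interior.smul₀ (by positivity)
  obtain ⟨u, hu1, hu2⟩ := hS.elim_nhds_subcover (fun x => ((nn x : ℝ) + 1) • interior W)
    (fun x hx => (hUopen x).mem_nhds (hnn x hx))
  set N := u.sup nn with hN
  refine ⟨N, ?_⟩
  intro x hx
  obtain ⟨y, hy, hxy⟩ := Set.mem_iUnion₂.1 (hu2 hx)
  have hsub : ((nn y : ℝ) + 1) • interior W ⊆ ((N : ℝ) + 1) • W := by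
    refine Set.Subset.trans ?_ (Set.smul_set_mono interior_subset)
    apply hWbal.interior h0i |>.smul_mono
    have e1 : ‖((nn y : ℝ) + 1)‖ = (nn y : ℝ) + 1 := Real.norm_of_nonneg (by positivity)
    have e2 : ‖((N : ℝ) + 1)‖ = (N : ℝ) + 1 := Real.norm_of_nonneg (by positivity)
    rw [e1, e2]
    have : nn y ≤ N := Finset.le_sup hy
    have : (nn y : ℝ) ≤ (N : ℝ) := Nat.cast_le.2 this
    linarith
  exact Set.smul_set_mono hWV (hsub hxy)

end MKtop

theorem stmt7 {X : Type*} [AddCommGroup X] [Module ℝ X] [TopologicalSpace X]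
    [IsTopologicalAddGroup X] [ContinuousSMul ℝ X] [T2Space X] [LocallyConvexSpace ℝ X]
    (K : Set X) (hne : K.Nonempty) (hconv : Convex ℝ K) (hcomp : IsCompact K)
    (F : Set (K → K))
    (hF : ∀ f ∈ F, Continuous f ∧ AffOn K f)
    (hclosed : ∀ f ∈ F, ∀ g ∈ F, f ∘ g ∈ F)
    (habel : ∀ f ∈ F, ∀ g ∈ F, f ∘ g = g ∘ f) :
    ∃ p : K, ∀ f ∈ F, f p = p := by
  classical
  obtain ⟨x₀, hx₀⟩ := hne
  set q₀ : K := ⟨x₀, hx₀⟩ with hq₀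
  haveI : CompactSpace K := isCompact_iff_compactSpace.mp hcomp
  set t : {g : K → K // g ∈ F} × ℕ → Set K :=
    fun i => Set.range (Tav hconv i.1.1 i.2) with ht
  have htc : ∀ i, IsClosed (t i) :=
    fun i => (isCompact_range (continuous_Tav hconv (hF i.1.1 i.1.2).1 i.2)).isClosed
  have key : ∀ L : List ({g : K → K // g ∈ F} × ℕ), ∀ q : K, ∀ i ∈ L,
      (L.foldr (fun j g => Tav hconv j.1.1 j.2 ∘ g) id q) ∈ t i := by
    intro L
    induction L with
    | nil => intro q i hi; simp at hi
    | cons j L ih =>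
      intro q i hi
      rcases List.mem_cons.1 hi with rfl | hi
      · exact ⟨_, rfl⟩
      · obtain ⟨r, hr⟩ := ih q i hi
        have hcomm := Tav_comm hconv (hF i.1.1 i.1.2).2 (hF j.1.1 j.1.2).2
          (habel i.1.1 i.1.2 j.1.1 j.1.2) i.2 j.2
        refine ⟨Tav hconv j.1.1 j.2 r, ?_⟩
        calc Tav hconv i.1.1 i.2 (Tav hconv j.1.1 j.2 r)
            = Tav hconv j.1.1 j.2 (Tav hconv i.1.1 i.2 r) := congrFun hcomm r
          _ = _ := by rw [hr]; simp [List.foldr_cons]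
  have hfip : ∀ u : Finset ({g : K → K // g ∈ F} × ℕ),
      (Set.univ ∩ ⋂ i ∈ u, t i).Nonempty := by
    intro u
    refine ⟨_, Set.mem_inter (Set.mem_univ _) (Set.mem_iInter₂.mpr
      fun i hi => key u.toList q₀ i (Finset.mem_toList.mpr hi))⟩
  have hne2 : (Set.univ ∩ ⋂ i, t i).Nonempty := by
    by_contra hcon
    rw [Set.not_nonempty_iff_eq_empty] at hcon
    obtain ⟨u, hu⟩ := isCompact_univ.elim_finite_subfamily_closed t htc hcon
    exact (hfip u).ne_empty hu
  obtain ⟨p, -, hp⟩ := hne2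
  refine ⟨p, ?_⟩
  intro f hfF
  have key2 : ∀ n : ℕ, ((f p : K) : X) - (p : X) ∈ ((n : ℝ) + 1)⁻¹ • (K - K) := by
    intro n
    obtain ⟨q, hq⟩ := Set.mem_iInter.1 hp ⟨⟨f, hfF⟩, n⟩
    have hfp : ((f p : K) : X) = mkAvg (n + 1) (fun k => ((f^[k+1] q : K) : X)) := by
      rw [← hq]
      have e := AffOn.map_mkAvg hconv (hF f hfF).2 (n + 1) n.succ_pos (fun k => f^[k] q)
        (mkAvg_mem hconv n.succ_pos (fun k => (f^[k] q).2))
      have e2 : (f (Tav hconv f n q) : X)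
          = mkAvg (n + 1) (fun k => ((f (f^[k] q) : K) : X)) := e
      rw [e2]
      congr 1
      funext k
      rw [Function.iterate_succ_apply' f k q]
    have hpp : ((p : K) : X) = mkAvg (n + 1) (fun k => ((f^[k] q : K) : X)) := by
      rw [← hq]; rfl
    have hdiff : ((f p : K) : X) - (p : X)
        = ((n : ℝ) + 1)⁻¹ • (((f^[n+1] q : K) : X) - ((q : K) : X)) := by
      rw [hfp, hpp, mkAvg, mkAvg, ← smul_sub, ← Finset.sum_sub_distrib,
        Finset.sum_range_sub (fun k => ((f^[k] q : K) : X))]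
      push_cast
      simp [Function.iterate_zero_apply]
    rw [hdiff]
    exact Set.smul_mem_smul_set (Set.sub_mem_sub (f^[n+1] q).2 q.2)
  have hKK : IsCompact (K - K) := by
    rw [sub_eq_add_neg]
    exact hcomp.add hcomp.neg
  have hzero : ((f p : K) : X) - (p : X) = 0 := by
    by_contra hv
    have hV : ({((f p : K) : X) - (p : X)}ᶜ : Set X) ∈ 𝓝 (0 : X) :=
      isOpen_compl_singleton.mem_nhds (by simpa using Ne.symm hv)
    obtain ⟨n, hn⟩ := compact_subset_scaled hKK hV
    have hw' := key2 n
    rw [Set.mem_smul_set] at hw'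
    obtain ⟨w, hw, hweq⟩ := hw'
    have hu' := hn hw
    rw [Set.mem_smul_set] at hu'
    obtain ⟨u, hu, hueq⟩ := hu'
    have h1 : ((n : ℝ) + 1) ≠ 0 := by positivity
    have heq : ((f p : K) : X) - (p : X) = u := by
      rw [← hweq, ← hueq, smul_smul, inv_mul_cancel₀ h1, one_smul]
    exact hu (by simp [heq])
  exact Subtype.ext (sub_eq_zero.mp hzero)
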